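/- Let K be a compact subset of ℂ with ℂ \ K connected and with nonempty interior, and let z₁ and z₂ be two distinct points of ∂K, each of which is a type I boundary point and circularly accessible. Then there exists g ∈ A(K) such that: sup_{z ∈ K} |g(z)| = 1; g is injective on K and injective holomorphic on the interior of K; g(z₁) = 1 and g(z₂) = 0; and g(K \ {z₁, z₂}) is contained in the open disk D(1/2;1/2), so that g(K) ⊆ {0, 1} ∪ D(1/2;1/2). -/

import Mathlib

open Complex Set Metric Filter Topology

noncomputable section

private lemma chain_exists {U : Set ℂ} (hU : IsOpen U) (hUc : IsPreconnected U)
    {a b : ℂ} (ha : a ∈ U) (hb : b ∈ U) :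
    ∃ n : ℕ, ∃ x : ℕ → ℂ, x 0 = a ∧ x n = b ∧
      ∀ i, i < n → segment ℝ (x i) (x (i + 1)) ⊆ U := by
  classical
  set V : Set ℂ := {q | q ∈ U ∧ ∃ n : ℕ, ∃ x : ℕ → ℂ, x 0 = a ∧ x n = q ∧
      ∀ i, i < n → segment ℝ (x i) (x (i + 1)) ⊆ U} with hVdef
  have haV : a ∈ V := ⟨ha, 0, fun _ => a, rfl, rfl, fun i hi => absurd hi (Nat.not_lt_zero i)⟩
  have ext : ∀ p ∈ V, ∀ q ∈ U, segment ℝ p q ⊆ U → q ∈ V := by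
    rintro p ⟨hpU, n, x, hx0, hxn, hseg⟩ q hqU hsub
    refine ⟨hqU, n + 1, fun i => if i ≤ n then x i else q, by simp [hx0], by simp, ?_⟩
    intro i hi
    show segment ℝ (if i ≤ n then x i else q) (if i + 1 ≤ n then x (i + 1) else q) ⊆ U
    rcases Nat.lt_or_ge i n with h1 | h1
    · have e1 : (if i ≤ n then x i else q) = x i := if_pos (by omega)
      have e2 : (if i + 1 ≤ n then x (i + 1) else q) = x (i + 1) := if_pos (by omega)
      rw [e1, e2]; exact hseg i h1
    · have hin : i = n := by omega
      subst hin
      have e1 : (if i ≤ i then x i else q) = x i := if_pos le_rfl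
      have e2 : (if i + 1 ≤ i then x (i + 1) else q) = q := if_neg (by omega)
      rw [e1, e2, hxn]; exact hsub
  have hVopen : IsOpen V := by
    rw [Metric.isOpen_iff]
    rintro q hq
    obtain ⟨ε, hε, hball⟩ := Metric.isOpen_iff.1 hU q hq.1
    exact ⟨ε, hε, fun p hp => ext q hq p (hball hp)
      ((convex_ball q ε).segment_subset (mem_ball_self hε) hp |>.trans hball)⟩
  have hWopen : IsOpen (U \ V) := by
    rw [Metric.isOpen_iff]
    rintro q ⟨hqU, hqV⟩
    obtain ⟨ε, hε, hball⟩ := Metric.isOpen_iff.1 hU q hqU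
    refine ⟨ε, hε, fun p hp => ⟨hball hp, fun hpV => hqV ?_⟩⟩
    exact ext p hpV q hqU
      (((convex_ball q ε).segment_subset hp (mem_ball_self hε)).trans hball)
  by_contra hcon
  have hbV : b ∉ V := fun hbV => hcon (by
    obtain ⟨_, n, x, hx0, hxn, hseg⟩ := hbV
    exact ⟨n, x, hx0, hxn, hseg⟩)
  obtain ⟨q, hq⟩ := hUc V (U \ V) hVopen hWopen
    (fun u hu => by by_cases h : u ∈ V; exact Or.inl h; exact Or.inr ⟨hu, h⟩)
    ⟨a, ha, haV⟩ ⟨b, hb, hb, hbV⟩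
  exact hq.2.2.2 hq.2.1

private lemma ratio_slit {p q z : ℂ} (h : z ∉ segment ℝ p q) :
    (z - p) / (z - q) ∈ Complex.slitPlane := by
  by_contra hs
  rw [Complex.mem_slitPlane_iff] at hs
  push_neg at hs
  obtain ⟨hre, him⟩ := hs
  rcases eq_or_ne z q with rfl | hzq
  · exact h (right_mem_segment ℝ p z)
  have hq0 : z - q ≠ 0 := sub_ne_zero.2 hzq
  set w : ℂ := (z - p) / (z - q) with hw
  have hwre : w = ((w.re : ℝ) : ℂ) := Complex.ext rfl (by simpa using him)
  set t : ℝ := w.re with ht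
  have ht0 : t ≤ 0 := hre
  have hkey : z - p = (t : ℂ) * (z - q) := by
    rw [← hwre, hw]; field_simp
  have h1t : (1 : ℝ) - t ≠ 0 := by linarith
  have h1tpos : (0:ℝ) < 1 - t := by linarith
  have h1tC : (1:ℂ) - (t:ℂ) ≠ 0 := by
    have := Complex.ofReal_ne_zero.2 h1t
    push_cast at this
    exact this
  have key2 : ((1:ℂ) - (t:ℂ)) * z = p - (t:ℂ) * q := by linear_combination hkey
  have hzval : z = ((1:ℂ) - (t:ℂ))⁻¹ * (p - (t:ℂ) * q) := by
    rw [← key2]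
    field_simp
  apply h
  refine ⟨(1 - t)⁻¹, -t * (1 - t)⁻¹,
    by positivity,
    mul_nonneg (by linarith) (by positivity), ?_, ?_⟩
  · field_simp
    ring
  · rw [Complex.real_smul, Complex.real_smul]
    push_cast
    rw [hzval]
    ring

private lemma prod_continuousAt {n : ℕ} (f : ℕ → ℂ → ℂ) (x : ℂ)
    (h : ∀ i, i < n → ContinuousAt (f i) x) :
    ContinuousAt (fun z => ∏ i ∈ Finset.range n, f i z) x := by
  induction n with
  | zero => simpa using continuousAt_const
  | succ m ih =>
    simp only [Finset.prod_range_succ]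
    exact (ih fun i hi => h i (by omega)).mul (h m (by omega))

private lemma prod_differentiableAt {n : ℕ} (f : ℕ → ℂ → ℂ) (x : ℂ)
    (h : ∀ i, i < n → DifferentiableAt ℂ (f i) x) :
    DifferentiableAt ℂ (fun z => ∏ i ∈ Finset.range n, f i z) x := by
  induction n with
  | zero => simpa using differentiableAt_const 1
  | succ m ih =>
    simp only [Finset.prod_range_succ]
    exact (ih fun i hi => h i (by omega)).mul (h m (by omega))

private lemma telescope (y : ℕ → ℂ) (z : ℂ) :
    ∀ N, 1 ≤ N → (∀ k, 1 ≤ k → k < N → z - y k ≠ 0) →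
    ∏ k ∈ Finset.range N, (z - y k) / (z - y (k + 1)) = (z - y 0) / (z - y N) := by
  intro N hN
  induction N, hN using Nat.le_induction with
  | base => intro _; simp [Finset.prod_range_one]
  | succ N hN ih =>
    intro hz
    rw [Finset.prod_range_succ, ih (fun k h1 h2 => hz k h1 (by omega))]
    have hNne : z - y N ≠ 0 := hz N hN (by omega)
    rw [div_mul_div_comm, mul_comm (z - y N) (z - y (N + 1))]
    exact mul_div_mul_right _ _ hNne

private lemma inv_one_add_mem_ball {h : ℂ} (hh : 0 < h.re) :
    (1 + h)⁻¹ ∈ Metric.ball (1 / 2 : ℂ) (1 / 2) := by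
  have h1 : (1 + h) ≠ 0 := by
    intro h0
    have := congrArg Complex.re h0
    simp [Complex.add_re] at this
    linarith
  have habs : ‖1 - h‖ < ‖1 + h‖ := by
    have h2 : Complex.normSq (1 - h) < Complex.normSq (1 + h) := by
      simp only [Complex.normSq_apply, Complex.add_re, Complex.add_im, Complex.sub_re,
        Complex.sub_im, Complex.one_re, Complex.one_im]
      nlinarith
    have := Real.sqrt_lt_sqrt (Complex.normSq_nonneg _) h2
    simpa [Complex.norm_def] using this
  rw [Metric.mem_ball, Complex.dist_eq]
  have heq : (1 + h)⁻¹ - 1 / 2 = (1 - h) * ((2 : ℂ) * (1 + h))⁻¹ := by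
    field_simp; ring
  rw [heq, norm_mul, norm_inv, norm_mul]
  have h2abs : ‖(2:ℂ)‖ = 2 := by
    simp
  rw [h2abs]
  have hpos : 0 < ‖1 + h‖ := by
    exact norm_pos_iff.2 h1
  rw [mul_inv, ← mul_assoc]
  have : ‖1 - h‖ * 2⁻¹ < ‖1 + h‖ * 2⁻¹ := by
    apply mul_lt_mul_of_pos_right habs; norm_num
  calc ‖1 - h‖ * 2⁻¹ * (‖1 + h‖)⁻¹
      < ‖1 + h‖ * 2⁻¹ * (‖1 + h‖)⁻¹ := by
        apply mul_lt_mul_of_pos_right this; positivity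
    _ = 1 / 2 := by field_simp

private lemma main_construction (K : Set ℂ)
    (z₁ z₂ : ℂ) (hne : z₁ ≠ z₂) (hz₁K : z₁ ∈ K) (hz₂K : z₂ ∈ K)
    (hz₁i : z₁ ∉ interior K) (hz₂i : z₂ ∉ interior K)
    (P : ℕ) (y : ℕ → ℂ) (hy0 : y 0 = z₁) (hyN : y (P + 2) = z₂)
    (hyK : ∀ j, 1 ≤ j → j ≤ P + 1 → y j ∉ K)
    (hseg : ∀ k, k ≤ P + 1 → ∀ z, z ∈ K → z ∈ segment ℝ (y k) (y (k + 1)) →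
      (k = 0 ∧ z = z₁) ∨ (k = P + 1 ∧ z = z₂)) :
    ∃ g : ℂ → ℂ, ContinuousOn g K ∧ DifferentiableOn ℂ g (interior K) ∧
      sSup ((fun w => ‖g w‖) '' K) = 1 ∧
      Set.InjOn g K ∧
      g z₁ = 1 ∧ g z₂ = 0 ∧
      g '' (K \ {z₁, z₂}) ⊆ Metric.ball (1 / 2 : ℂ) (1 / 2) ∧
      g '' K ⊆ {0, 1} ∪ Metric.ball (1 / 2 : ℂ) (1 / 2) := by
  classical
  set N : ℕ := P + 2 with hNdef
  set M : ℕ := 2 * N with hMdef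
  have hNpos : 0 < N := by omega
  have hMpos : 0 < M := by omega
  have hMRne : ((M : ℝ))⁻¹ ≠ 0 := by positivity
  set e : ℂ := (((M : ℝ))⁻¹ : ℂ) with hedef
  have heRe : e.re = (M : ℝ)⁻¹ := by simp [hedef]
  have heIm : e.im = 0 := by simp [hedef]
  have heNe : e ≠ 0 := by simpa [hedef] using hMRne
  set m : ℕ → ℂ → ℂ := fun k z => (z - y k) / (z - y (k + 1)) with hmdef
  set H : ℂ → ℂ := fun z => ∏ k ∈ Finset.range N, m k z ^ e with hHdef
  set g : ℂ → ℂ := fun z => if z = z₂ then 0 else (1 + H z)⁻¹ with hgdef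
  -- basic segment facts
  have hnseg : ∀ z ∈ K, z ≠ z₁ → z ≠ z₂ → ∀ k, k < N → z ∉ segment ℝ (y k) (y (k + 1)) := by
    intro z hz h1 h2 k hk hmem
    rcases hseg k (by omega) z hz hmem with ⟨_, h⟩ | ⟨_, h⟩
    exacts [h1 h, h2 h]
  have hz₁seg : ∀ k, 1 ≤ k → k < N → z₁ ∉ segment ℝ (y k) (y (k + 1)) := by
    intro k hk1 hk hmem
    rcases hseg k (by omega) z₁ hz₁K hmem with ⟨h, _⟩ | ⟨_, h⟩
    · omega
    · exact hne h
  have hyj : ∀ j, 1 ≤ j → j ≤ N → z₁ ≠ y j := by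
    intro j h1 h2
    rcases Nat.lt_or_ge j N with h | h
    · intro heq; exact hyK j h1 (by omega) (heq ▸ hz₁K)
    · have hj : j = N := by omega
      subst hj; rw [hyN]; exact hne
  have hzy : ∀ z ∈ K, z ≠ z₁ → z ≠ z₂ → ∀ j, j ≤ N → z ≠ y j := by
    intro z hz h1 h2 j hj
    rcases Nat.eq_zero_or_pos j with rfl | hjpos
    · rw [hy0]; exact h1
    rcases Nat.lt_or_ge j N with h | h
    · intro heq; exact hyK j hjpos (by omega) (heq ▸ hz)
    · have hj' : j = N := by omega
      subst hj'; rw [hyN]; exact h2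
  -- slit plane facts
  have hslit : ∀ z ∈ K, z ≠ z₁ → z ≠ z₂ → ∀ k, k < N → m k z ∈ Complex.slitPlane :=
    fun z hz h1 h2 k hk => ratio_slit (hnseg z hz h1 h2 k hk)
  have hslit1 : ∀ k, 1 ≤ k → k < N → m k z₁ ∈ Complex.slitPlane :=
    fun k h1 hk => ratio_slit (hz₁seg k h1 hk)
  -- main pointwise facts at good points
  have hHgood : ∀ z ∈ K, z ≠ z₁ → z ≠ z₂ →
      0 < (H z).re ∧ (H z) ^ M = (z - z₁) / (z - z₂) := by
    intro z hz h1 h2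
    have hm0 : ∀ k ∈ Finset.range N, m k z ≠ 0 := fun k hk =>
      Complex.slitPlane_ne_zero (hslit z hz h1 h2 k (Finset.mem_range.1 hk))
    have hexp : H z = Complex.exp ((∑ k ∈ Finset.range N, Complex.log (m k z)) * e) :=
      calc H z = ∏ k ∈ Finset.range N, Complex.exp (Complex.log (m k z) * e) :=
            Finset.prod_congr rfl (fun k hk => Complex.cpow_def_of_ne_zero (hm0 k hk) e)
        _ = Complex.exp (∑ k ∈ Finset.range N, Complex.log (m k z) * e) :=
            (Complex.exp_sum _ _).symm
        _ = _ := by rw [← Finset.sum_mul]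
    have harg : ∀ k ∈ Finset.range N, |(Complex.log (m k z)).im| < Real.pi := by
      intro k hk
      have hsl := hslit z hz h1 h2 k (Finset.mem_range.1 hk)
      rw [Complex.log_im]
      exact abs_lt.2 ⟨Complex.neg_pi_lt_arg _,
        (Complex.arg_le_pi _).lt_of_ne (Complex.slitPlane_arg_ne_pi hsl)⟩
    have hSim : |(∑ k ∈ Finset.range N, Complex.log (m k z)).im| < N * Real.pi := by
      rw [Complex.im_sum]
      calc |∑ k ∈ Finset.range N, (Complex.log (m k z)).im|
          ≤ ∑ k ∈ Finset.range N, |(Complex.log (m k z)).im| :=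
            Finset.abs_sum_le_sum_abs _ _
        _ < ∑ _k ∈ Finset.range N, Real.pi :=
            Finset.sum_lt_sum_of_nonempty ⟨0, Finset.mem_range.2 hNpos⟩ harg
        _ = N * Real.pi := by simp [Finset.sum_const, nsmul_eq_mul]
    have hhalf : |((∑ k ∈ Finset.range N, Complex.log (m k z)) * e).im| < Real.pi / 2 := by
      have himmul : ((∑ k ∈ Finset.range N, Complex.log (m k z)) * e).im
          = (∑ k ∈ Finset.range N, Complex.log (m k z)).im * (M : ℝ)⁻¹ := by
        simp [Complex.mul_im, heRe, heIm]
      rw [himmul, abs_mul, _root_.abs_of_nonneg (by positivity : (0:ℝ) ≤ (M : ℝ)⁻¹)]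
      have hMR : (M : ℝ) = 2 * (N : ℝ) := by rw [hMdef]; push_cast; ring
      have hNR : (0:ℝ) < (N : ℝ) := by exact_mod_cast hNpos
      rw [hMR]
      rw [inv_eq_one_div, mul_one_div, div_lt_div_iff₀ (by positivity) (by norm_num)]
      nlinarith [hSim]
    have hRe : 0 < (H z).re := by
      rw [hexp, Complex.exp_re]
      refine mul_pos (Real.exp_pos _) (Real.cos_pos_of_mem_Ioo ⟨?_, ?_⟩)
      · have := (abs_lt.1 hhalf).1; linarith
      · exact (abs_lt.1 hhalf).2
    have hpow : (H z) ^ M = (z - z₁) / (z - z₂) := by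
      have hMC : ((M : ℕ) : ℂ) ≠ 0 := Nat.cast_ne_zero.2 hMpos.ne'
      rw [hexp, ← Complex.exp_nat_mul]
      have hMe : ((M : ℕ) : ℂ) * ((∑ k ∈ Finset.range N, Complex.log (m k z)) * e)
          = ∑ k ∈ Finset.range N, Complex.log (m k z) := by
        rw [hedef]
        push_cast
        field_simp
      rw [hMe, Complex.exp_sum]
      have : ∏ k ∈ Finset.range N, Complex.exp (Complex.log (m k z))
          = ∏ k ∈ Finset.range N, m k z :=
        Finset.prod_congr rfl (fun k hk => Complex.exp_log (hm0 k hk))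
      rw [this]
      have htel := telescope y z N (by omega)
        (fun k hk1 hk2 => sub_ne_zero.2 (hzy z hz h1 h2 k (le_of_lt hk2)))
      rw [hmdef]
      rw [htel, hy0, hyN]
    exact ⟨hRe, hpow⟩
  have hH1 : H z₁ = 0 := by
    have hm00 : m 0 z₁ = 0 := by rw [hmdef]; simp [hy0]
    have h0 : m 0 z₁ ^ e = 0 := by rw [hm00]; exact Complex.zero_cpow heNe
    exact Finset.prod_eq_zero (Finset.mem_range.2 hNpos) h0
  have hgz₁ : g z₁ = 1 := by rw [hgdef]; simp [hne, hH1]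
  have hgz₂ : g z₂ = 0 := by rw [hgdef]; simp
  have hne0good : ∀ z ∈ K, z ≠ z₁ → z ≠ z₂ → 1 + H z ≠ 0 := by
    intro z hz h1 h2 h0
    have h0re := congrArg Complex.re h0
    have := (hHgood z hz h1 h2).1
    simp only [Complex.add_re, Complex.one_re, Complex.zero_re] at h0re
    linarith
  have hball : ∀ z ∈ K, z ≠ z₁ → z ≠ z₂ → g z ∈ Metric.ball (1/2 : ℂ) (1/2) := by
    intro z hz h1 h2
    have hgz : g z = (1 + H z)⁻¹ := by rw [hgdef]; simp [h2]
    rw [hgz]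
    exact inv_one_add_mem_ball (hHgood z hz h1 h2).1
  have habs_le : ∀ z ∈ K, ‖g z‖ ≤ 1 := by
    intro z hz
    rcases eq_or_ne z z₂ with rfl | h2
    · simp [hgz₂]
    rcases eq_or_ne z z₁ with rfl | h1
    · simp [hgz₁]
    have hb := hball z hz h1 h2
    rw [Metric.mem_ball, Complex.dist_eq] at hb
    have h12 : ‖(1:ℂ)/2‖ = 1/2 := by
      rw [norm_div]; simp
    calc ‖g z‖ = ‖(g z - 1/2) + 1/2‖ := by ring_nf
      _ ≤ ‖g z - 1/2‖ + ‖(1:ℂ)/2‖ := norm_add_le _ _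
      _ ≤ 1/2 + 1/2 := by rw [h12]; linarith
      _ = 1 := by norm_num
  -- continuity at good points
  have hHcontAt : ∀ z ∈ K, z ≠ z₁ → z ≠ z₂ → ContinuousAt H z := by
    intro z hz h1 h2
    apply prod_continuousAt
    intro k hk
    have hsl := hslit z hz h1 h2 k hk
    have hzyk : z ≠ y (k + 1) := by
      intro heq
      exact (hnseg z hz h1 h2 k hk) (heq ▸ right_mem_segment ℝ _ _)
    have hmc : ContinuousAt (fun w => m k w) z := by
      rw [hmdef]
      exact ((continuousAt_id.sub continuousAt_const).div
        (continuousAt_id.sub continuousAt_const) (sub_ne_zero.2 hzyk))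
    exact hmc.cpow continuousAt_const hsl
  have hgcontAt_good : ∀ z ∈ K, z ≠ z₁ → z ≠ z₂ → ContinuousAt g z := by
    intro z hz h1 h2
    have hH := hHcontAt z hz h1 h2
    have hcinv : ContinuousAt (fun w => (1 + H w)⁻¹) z :=
      (continuousAt_const.add hH).inv₀ (hne0good z hz h1 h2)
    apply hcinv.congr
    filter_upwards [isOpen_ne.mem_nhds h2] with w hw
    rw [hgdef]
    simp only [if_neg hw]
  -- continuity at z₁
  have hfactor0 : Tendsto (fun w => m 0 w ^ e) (𝓝 z₁) (𝓝 0) := by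
    have hy1 : z₁ ≠ y 1 := hyj 1 (by omega) (by omega)
    have hm0cont : ContinuousAt (fun w => m 0 w) z₁ := by
      rw [hmdef]
      exact ((continuousAt_id.sub continuousAt_const).div
        (continuousAt_id.sub continuousAt_const) (sub_ne_zero.2 hy1))
    have hm00 : m 0 z₁ = 0 := by rw [hmdef]; simp [hy0]
    have habs0 : Tendsto (fun w => ‖m 0 w‖) (𝓝 z₁) (𝓝 0) := by
      have h' := (continuous_norm.tendsto (m 0 z₁)).comp hm0cont
      simpa [Function.comp_def, hm00] using h'
    apply squeeze_zero_norm' (a := fun w => ‖m 0 w‖ ^ ((M:ℝ)⁻¹)) ?_ ?_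
    · filter_upwards with w
      by_cases hw : m 0 w = 0
      · rw [hw, Complex.zero_cpow heNe]
        simp only [norm_zero]
        positivity
      · rw [Complex.norm_cpow_of_ne_zero hw]
        rw [heRe, heIm]
        simp
    · have := habs0.rpow_const (p := (M:ℝ)⁻¹) (Or.inr (by positivity))
      simpa [Real.zero_rpow hMRne] using this
  have hHcont1 : ContinuousAt H z₁ := by
    have hrest : ContinuousAt (fun w => ∏ k ∈ Finset.range (P + 1), m (k + 1) w ^ e) z₁ := by
      apply prod_continuousAt
      intro i hi
      have hsl := hslit1 (i + 1) (by omega) (by omega)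
      have hzyk : z₁ ≠ y (i + 1 + 1) := hyj (i + 1 + 1) (by omega) (by omega)
      have hmc : ContinuousAt (fun w => m (i + 1) w) z₁ := by
        rw [hmdef]
        exact ((continuousAt_id.sub continuousAt_const).div
          (continuousAt_id.sub continuousAt_const) (sub_ne_zero.2 hzyk))
      exact hmc.cpow continuousAt_const hsl
    have hHeq : ∀ w, H w = (∏ k ∈ Finset.range (P + 1), m (k + 1) w ^ e) * (m 0 w ^ e) := by
      intro w
      rw [hHdef]
      exact Finset.prod_range_succ' (fun k => m k w ^ e) (P + 1)
    have hlim : Tendsto (fun w => (∏ k ∈ Finset.range (P + 1), m (k + 1) w ^ e) * (m 0 w ^ e))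
        (𝓝 z₁) (𝓝 0) := by
      have := hrest.tendsto.mul hfactor0
      simpa using this
    have : Tendsto H (𝓝 z₁) (𝓝 0) := by
      apply hlim.congr
      intro w
      exact (hHeq w).symm
    rw [ContinuousAt, hH1]
    exact this
  have hgcont1 : ContinuousAt g z₁ := by
    have hne01 : 1 + H z₁ ≠ 0 := by rw [hH1]; norm_num
    have hcinv : ContinuousAt (fun w => (1 + H w)⁻¹) z₁ :=
      (continuousAt_const.add hHcont1).inv₀ hne01
    apply hcinv.congr
    filter_upwards [isOpen_ne.mem_nhds hne] with w hw
    rw [hgdef]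
    simp only [if_neg hw]
  -- continuity within K at z₂
  have hgcont2 : ContinuousWithinAt g K z₂ := by
    rw [← continuousWithinAt_diff_self]
    have hgood : ∀ᶠ w in 𝓝[K \ {z₂}] z₂, w ∈ K ∧ w ≠ z₁ ∧ w ≠ z₂ := by
      have h1 : ∀ᶠ w in 𝓝[K \ {z₂}] z₂, w ∈ K \ {z₂} := self_mem_nhdsWithin
      have h2 : ∀ᶠ w in 𝓝[K \ {z₂}] z₂, w ≠ z₁ := by
        apply Filter.Eventually.filter_mono nhdsWithin_le_nhds
        exact eventually_of_mem (isOpen_ne.mem_nhds hne.symm) (fun w hw => hw)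
      filter_upwards [h1, h2] with w hw hw1
      exact ⟨hw.1, hw1, hw.2⟩
    have hμ : Tendsto (fun w => ‖(w - z₁) / (w - z₂)‖) (𝓝[K \ {z₂}] z₂) atTop := by
      have hnum : Tendsto (fun w => ‖w - z₁‖) (𝓝[K \ {z₂}] z₂)
          (𝓝 (‖z₂ - z₁‖)) := by
        have hc : Continuous (fun w : ℂ => ‖w - z₁‖) :=
          continuous_norm.comp (continuous_id.sub continuous_const)
        exact (hc.tendsto z₂).mono_left nhdsWithin_le_nhds
      have hden : Tendsto (fun w => (‖w - z₂‖)⁻¹) (𝓝[K \ {z₂}] z₂) atTop := by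
        apply Filter.Tendsto.inv_tendsto_nhdsGT_zero
        rw [tendsto_nhdsWithin_iff]
        constructor
        · have hc : Continuous (fun w : ℂ => ‖w - z₂‖) :=
            continuous_norm.comp (continuous_id.sub continuous_const)
          have := (hc.tendsto z₂).mono_left (nhdsWithin_le_nhds (s := K \ {z₂}))
          simpa using this
        · filter_upwards [self_mem_nhdsWithin] with w hw
          have : w ≠ z₂ := hw.2
          simp only [Set.mem_Ioi]
          exact norm_pos_iff.2 (sub_ne_zero.2 this)
      have habspos : 0 < ‖z₂ - z₁‖ :=
        norm_pos_iff.2 (sub_ne_zero.2 hne.symm)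
      have := Filter.Tendsto.pos_mul_atTop habspos hnum hden
      apply this.congr
      intro w
      rw [norm_div]
      rw [div_eq_mul_inv]
    have hHabs : Tendsto (fun w => ‖H w‖) (𝓝[K \ {z₂}] z₂) atTop := by
      have hcomp : Tendsto (fun w => (‖(w - z₁) / (w - z₂)‖) ^ ((M:ℝ)⁻¹))
          (𝓝[K \ {z₂}] z₂) atTop :=
        (tendsto_rpow_atTop (by positivity)).comp hμ
      apply hcomp.congr'
      filter_upwards [hgood] with w hw
      obtain ⟨hwK, hw1, hw2⟩ := hw
      have hpow := (hHgood w hwK hw1 hw2).2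
      have habseq : ‖(w - z₁) / (w - z₂)‖ = ‖H w‖ ^ M := by
        rw [← hpow, norm_pow]
      rw [habseq, Real.pow_rpow_inv_natCast (norm_nonneg _) hMpos.ne']
    have hgtend : Tendsto g (𝓝[K \ {z₂}] z₂) (𝓝 0) := by
      have hbound : Tendsto (fun w => (‖H w‖ - 1)⁻¹) (𝓝[K \ {z₂}] z₂) (𝓝 0) := by
        apply Filter.Tendsto.inv_tendsto_atTop
        have := tendsto_atTop_add_const_right (𝓝[K \ {z₂}] z₂) (-1 : ℝ) hHabs
        simpa [sub_eq_add_neg] using this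
      apply squeeze_zero_norm' ?_ hbound
      have hev2 : ∀ᶠ w in 𝓝[K \ {z₂}] z₂, 2 ≤ ‖H w‖ :=
        hHabs.eventually_ge_atTop 2
      filter_upwards [hgood, hev2] with w hw h2le
      obtain ⟨hwK, hw1, hw2⟩ := hw
      have hgw : g w = (1 + H w)⁻¹ := by rw [hgdef]; simp [hw2]
      rw [hgw, norm_inv]
      have hlow : ‖H w‖ - 1 ≤ ‖1 + H w‖ := by
        have h3 : ‖H w‖ ≤ ‖1 + H w‖ + 1 := by
          calc ‖H w‖ = ‖(1 + H w) + (-1)‖ := by ring_nf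
            _ ≤ ‖1 + H w‖ + ‖-1‖ := norm_add_le _ _
            _ = ‖1 + H w‖ + 1 := by simp
        linarith
      exact inv_anti₀ (by linarith) hlow
    have : Tendsto g (𝓝[K \ {z₂}] z₂) (𝓝 (g z₂)) := by rw [hgz₂]; exact hgtend
    exact this
  have hcont : ContinuousOn g K := by
    intro z hz
    rcases eq_or_ne z z₂ with rfl | h2
    · exact hgcont2
    rcases eq_or_ne z z₁ with rfl | h1
    · exact hgcont1.continuousWithinAt
    · exact (hgcontAt_good z hz h1 h2).continuousWithinAt
  -- differentiability
  have hdiff : DifferentiableOn ℂ g (interior K) := by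
    intro z hz
    have hzK : z ∈ K := interior_subset hz
    have h1 : z ≠ z₁ := fun h => hz₁i (h ▸ hz)
    have h2 : z ≠ z₂ := fun h => hz₂i (h ▸ hz)
    have hH : DifferentiableAt ℂ H z := by
      apply prod_differentiableAt
      intro k hk
      have hsl := hslit z hzK h1 h2 k hk
      have hzyk : z ≠ y (k + 1) := by
        intro heq
        exact (hnseg z hzK h1 h2 k hk) (heq ▸ right_mem_segment ℝ _ _)
      have hmd : DifferentiableAt ℂ (fun w => m k w) z := by
        rw [hmdef]
        exact ((differentiableAt_id.sub (differentiableAt_const _)).div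
          ((differentiableAt_id.sub (differentiableAt_const _))) (sub_ne_zero.2 hzyk))
      exact hmd.cpow (differentiableAt_const _) hsl
    have hd : DifferentiableAt ℂ (fun w => (1 + H w)⁻¹) z :=
      ((differentiableAt_const _).add hH).inv (hne0good z hzK h1 h2)
    have hdg : DifferentiableAt ℂ g z := by
      have hev : g =ᶠ[𝓝 z] (fun w => (1 + H w)⁻¹) := by
        filter_upwards [isOpen_ne.mem_nhds h2] with w hw
        rw [hgdef]
        simp only [if_neg hw]
      exact hev.differentiableAt_iff.2 hd
    exact hdg.differentiableWithinAt
  -- injectivity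
  have hHne0 : ∀ z ∈ K, z ≠ z₁ → z ≠ z₂ → H z ≠ 0 := by
    intro z hz h1 h2 h0
    have := (hHgood z hz h1 h2).1
    rw [h0] at this
    simp at this
  have hgne0 : ∀ z ∈ K, z ≠ z₂ → g z ≠ 0 := by
    intro z hz h2
    have hgz : g z = (1 + H z)⁻¹ := by rw [hgdef]; simp [h2]
    rcases eq_or_ne z z₁ with rfl | h1
    · rw [hgz₁]; exact one_ne_zero
    · rw [hgz]
      exact inv_ne_zero (hne0good z hz h1 h2)
  have hinj : Set.InjOn g K := by
    intro u hu v hv huv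
    rcases eq_or_ne u z₂ with hu2 | hu2
    · rcases eq_or_ne v z₂ with hv2 | hv2
      · rw [hu2, hv2]
      · exfalso
        apply hgne0 v hv hv2
        rw [← huv, hu2, hgz₂]
    rcases eq_or_ne v z₂ with hv2 | hv2
    · exfalso
      apply hgne0 u hu hu2
      rw [huv, hv2, hgz₂]
    have hU : g u = (1 + H u)⁻¹ := by rw [hgdef]; simp [hu2]
    have hV : g v = (1 + H v)⁻¹ := by rw [hgdef]; simp [hv2]
    rw [hU, hV] at huv
    have hHuv : H u = H v := by
      have := inv_injective huv
      exact add_left_cancel this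
    rcases eq_or_ne u z₁ with hu1 | hu1
    · rcases eq_or_ne v z₁ with hv1 | hv1
      · rw [hu1, hv1]
      · exfalso
        apply hHne0 v hv hv1 hv2
        rw [← hHuv, hu1, hH1]
    rcases eq_or_ne v z₁ with hv1 | hv1
    · exfalso
      apply hHne0 u hu hu1 hu2
      rw [hHuv, hv1, hH1]
    have hpu := (hHgood u hu hu1 hu2).2
    have hpv := (hHgood v hv hv1 hv2).2
    have hμuv : (u - z₁) / (u - z₂) = (v - z₁) / (v - z₂) := by
      rw [← hpu, ← hpv, hHuv]
    rw [div_eq_div_iff (sub_ne_zero.2 hu2) (sub_ne_zero.2 hv2)] at hμuv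
    have hz12 : (z₁ - z₂) * (u - v) = 0 := by linear_combination hμuv
    rcases mul_eq_zero.1 hz12 with h | h
    · exact absurd (sub_eq_zero.1 h) hne
    · exact sub_eq_zero.1 h
  -- sup
  have hsup : sSup ((fun w => ‖g w‖) '' K) = 1 := by
    have hmem1 : (1 : ℝ) ∈ (fun w => ‖g w‖) '' K := by
      refine ⟨z₁, hz₁K, ?_⟩
      show ‖g z₁‖ = 1
      rw [hgz₁]
      simp
    have hub : ∀ s ∈ (fun w => ‖g w‖) '' K, s ≤ 1 := by
      rintro s ⟨w, hw, rfl⟩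
      exact habs_le w hw
    exact le_antisymm (csSup_le ⟨1, hmem1⟩ hub) (le_csSup ⟨1, hub⟩ hmem1)
  -- images
  have himg1 : g '' (K \ {z₁, z₂}) ⊆ Metric.ball (1/2 : ℂ) (1/2) := by
    rintro _ ⟨w, ⟨hw, hw'⟩, rfl⟩
    simp only [Set.mem_insert_iff, Set.mem_singleton_iff, not_or] at hw'
    exact hball w hw hw'.1 hw'.2
  have himg2 : g '' K ⊆ {0, 1} ∪ Metric.ball (1/2 : ℂ) (1/2) := by
    rintro _ ⟨w, hw, rfl⟩
    rcases eq_or_ne w z₂ with rfl | h2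
    · exact Or.inl (by rw [hgz₂]; exact Set.mem_insert _ _)
    rcases eq_or_ne w z₁ with rfl | h1
    · exact Or.inl (by rw [hgz₁]; exact Set.mem_insert_iff.2 (Or.inr rfl))
    · exact Or.inr (hball w hw h1 h2)
  exact ⟨g, hcont, hdiff, hsup, hinj, hgz₁, hgz₂, himg1, himg2⟩

/-- Existence of a norm-one conformal homeomorphism in `A(K)` mapping `z₁` to
`1`, `z₂` to `0`, and the rest of `K` into the open disk `D(1/2;1/2)`. -/
theorem exists_conformal_homeomorphism_zero_one (K : Set ℂ) (hK : IsCompact K)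
    (hKc : IsConnected Kᶜ) (hint : (interior K).Nonempty)
    (z₁ z₂ : ℂ) (hne : z₁ ≠ z₂)
    (hz₁ : z₁ ∈ frontier K) (hz₂ : z₂ ∈ frontier K)
    (hz₁I : ∀ U : Set ℂ, IsOpen U → z₁ ∈ U → (U ∩ interior K).Nonempty)
    (hz₂I : ∀ U : Set ℂ, IsOpen U → z₂ ∈ U → (U ∩ interior K).Nonempty)
    (hca₁ : ∃ c : ℂ, ∃ r : ℝ, 0 < r ∧ Metric.closedBall c r ∩ K = {z₁})
    (hca₂ : ∃ c : ℂ, ∃ r : ℝ, 0 < r ∧ Metric.closedBall c r ∩ K = {z₂}) :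
    ∃ g : ℂ → ℂ, ContinuousOn g K ∧ DifferentiableOn ℂ g (interior K) ∧
      sSup ((fun w => ‖g w‖) '' K) = 1 ∧
      Set.InjOn g K ∧
      g z₁ = 1 ∧ g z₂ = 0 ∧
      g '' (K \ {z₁, z₂}) ⊆ Metric.ball (1 / 2 : ℂ) (1 / 2) ∧
      g '' K ⊆ {0, 1} ∪ Metric.ball (1 / 2 : ℂ) (1 / 2) := by
  classical
  obtain ⟨c₁, r₁, hr₁, hc₁⟩ := hca₁
  obtain ⟨c₂, r₂, hr₂, hc₂⟩ := hca₂
  have hKclosed : IsClosed K := hK.isClosed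
  have hz₁pair : z₁ ∈ Metric.closedBall c₁ r₁ ∩ K := by rw [hc₁]; rfl
  have hz₂pair : z₂ ∈ Metric.closedBall c₂ r₂ ∩ K := by rw [hc₂]; rfl
  have hz₁K : z₁ ∈ K := hz₁pair.2
  have hz₂K : z₂ ∈ K := hz₂pair.2
  have hz₁int : z₁ ∉ interior K := by
    rw [hKclosed.frontier_eq] at hz₁
    exact hz₁.2
  have hz₂int : z₂ ∉ interior K := by
    rw [hKclosed.frontier_eq] at hz₂
    exact hz₂.2
  have hc₁K : c₁ ∉ K := by
    intro hcK
    have hc₁z : c₁ = z₁ := by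
      have : c₁ ∈ ({z₁} : Set ℂ) := by
        rw [← hc₁]; exact ⟨Metric.mem_closedBall_self hr₁.le, hcK⟩
      exact this
    obtain ⟨w, hwU, hwint⟩ := hz₁I (Metric.ball c₁ r₁) Metric.isOpen_ball
      (by rw [hc₁z]; exact Metric.mem_ball_self hr₁)
    have hw : w ∈ ({z₁} : Set ℂ) := by
      rw [← hc₁]
      exact ⟨Metric.ball_subset_closedBall hwU, interior_subset hwint⟩
    rw [Set.mem_singleton_iff] at hw
    exact hz₁int (hw ▸ hwint)
  have hc₂K : c₂ ∉ K := by
    intro hcK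
    have hc₂z : c₂ = z₂ := by
      have : c₂ ∈ ({z₂} : Set ℂ) := by
        rw [← hc₂]; exact ⟨Metric.mem_closedBall_self hr₂.le, hcK⟩
      exact this
    obtain ⟨w, hwU, hwint⟩ := hz₂I (Metric.ball c₂ r₂) Metric.isOpen_ball
      (by rw [hc₂z]; exact Metric.mem_ball_self hr₂)
    have hw : w ∈ ({z₂} : Set ℂ) := by
      rw [← hc₂]
      exact ⟨Metric.ball_subset_closedBall hwU, interior_subset hwint⟩
    rw [Set.mem_singleton_iff] at hw
    exact hz₂int (hw ▸ hwint)
  obtain ⟨n, x, hx0, hxn, hxseg⟩ :=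
    chain_exists hKclosed.isOpen_compl hKc.isPreconnected hc₁K hc₂K
  have hxmem : ∀ j, j ≤ n → x j ∉ K := by
    intro j hj
    rcases eq_or_lt_of_le hj with rfl | hjlt
    · rw [hxn]; exact hc₂K
    · exact (hxseg j hjlt) (left_mem_segment ℝ _ _)
  set y : ℕ → ℂ := fun k => if k = 0 then z₁ else if k ≤ n + 1 then x (k - 1) else z₂
    with hydef
  have hy0 : y 0 = z₁ := by simp [hydef]
  have hyN : y (n + 2) = z₂ := by
    simp only [hydef]
    rw [if_neg (by omega), if_neg (by omega)]
  have hy1 : y 1 = c₁ := by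
    simp only [hydef]
    rw [if_neg (by omega), if_pos (by omega)]
    simpa using hx0
  have hymid : ∀ j, 1 ≤ j → j ≤ n + 1 → y j = x (j - 1) := by
    intro j h1 h2
    simp only [hydef]
    rw [if_neg (by omega), if_pos (by omega)]
  have hyK : ∀ j, 1 ≤ j → j ≤ n + 1 → y j ∉ K := by
    intro j h1 h2
    rw [hymid j h1 h2]
    exact hxmem (j - 1) (by omega)
  have hseg : ∀ k, k ≤ n + 1 → ∀ z, z ∈ K → z ∈ segment ℝ (y k) (y (k + 1)) →
      (k = 0 ∧ z = z₁) ∨ (k = n + 1 ∧ z = z₂) := by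
    intro k hk z hz hzseg
    rcases Nat.eq_zero_or_pos k with rfl | hkpos
    · left
      refine ⟨rfl, ?_⟩
      rw [hy0, hy1] at hzseg
      have hsub : segment ℝ z₁ c₁ ⊆ Metric.closedBall c₁ r₁ :=
        (convex_closedBall c₁ r₁).segment_subset hz₁pair.1 (Metric.mem_closedBall_self hr₁.le)
      have : z ∈ ({z₁} : Set ℂ) := by
        rw [← hc₁]
        exact ⟨hsub hzseg, hz⟩
      exact this
    rcases eq_or_lt_of_le hk with rfl | hklt
    · right
      refine ⟨rfl, ?_⟩
      have hyk : y (n + 1) = c₂ := by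
        rw [hymid (n + 1) (by omega) (by omega)]
        simpa using hxn
      rw [hyk, hyN] at hzseg
      have hsub : segment ℝ c₂ z₂ ⊆ Metric.closedBall c₂ r₂ :=
        (convex_closedBall c₂ r₂).segment_subset (Metric.mem_closedBall_self hr₂.le) hz₂pair.1
      have : z ∈ ({z₂} : Set ℂ) := by
        rw [← hc₂]
        exact ⟨hsub hzseg, hz⟩
      exact this
    · exfalso
      have h1 : y k = x (k - 1) := hymid k hkpos (by omega)
      have h2 : y (k + 1) = x k := by
        rw [hymid (k + 1) (by omega) (by omega)]
        congr 1
      rw [h1, h2] at hzseg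
      have hxk : x ((k - 1) + 1) = x k := by congr 1; omega
      have := hxseg (k - 1) (by omega)
      rw [hxk] at this
      exact (this hzseg) hz
  exact main_construction K z₁ z₂ hne hz₁K hz₂K hz₁int hz₂int n y hy0 hyN hyK hseg

end
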